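/- Let 1 ≤ k < n and let an n-player cake-cutting instance be in class X(k). Then every envy-free contiguous allocation whose utilitarian welfare is maximal among all envy-free contiguous allocations of the instance has utilitarian welfare at least n/(k+2). -/

import Mathlib

open MeasureTheory Set

/-- An `n`-player cake-cutting instance: continuous nonnegative density functions
on `[0,1]`, each of total integral `1`. -/
structure CakeInstance (n : ℕ) where
  d : Fin n → ℝ → ℝ
  cont : ∀ i, ContinuousOn (d i) (Set.Icc 0 1)
  nonneg : ∀ i, ∀ x ∈ Set.Icc (0:ℝ) 1, 0 ≤ d i x
  total : ∀ i, ∫ x in (0:ℝ)..1, d i x = 1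

namespace CakeInstance

/-- Value of player `i` for the interval `[a,b]`. -/
noncomputable def ival {n : ℕ} (C : CakeInstance n) (i : Fin n) (a b : ℝ) : ℝ :=
  ∫ x in a..b, C.d i x

/-- Value of player `i` for a set `S`. -/
noncomputable def sval {n : ℕ} (C : CakeInstance n) (i : Fin n) (S : Set ℝ) : ℝ :=
  ∫ x in S, C.d i x

end CakeInstance

/-- A contiguous allocation: weakly increasing cut points `x 0 = 0 ≤ … ≤ x n = 1`
together with a permutation `σ` assigning the `j`-th interval `[x j, x (j+1)]`
to player `σ j`. -/
structure ContigAlloc (n : ℕ) where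
  x : Fin (n+1) → ℝ
  mono : Monotone x
  first : x 0 = 0
  last : x (Fin.last n) = 1
  σ : Equiv.Perm (Fin n)

/-- The (closed) interval received by player `i` in a contiguous allocation. -/
def cpiece {n : ℕ} (A : ContigAlloc n) (i : Fin n) : Set ℝ :=
  Set.Icc (A.x (A.σ.symm i).castSucc) (A.x (A.σ.symm i).succ)

/-- Value of player `i` for the interval received by player `j`. -/
noncomputable def cval {n : ℕ} (C : CakeInstance n) (A : ContigAlloc n) (i j : Fin n) : ℝ :=
  C.ival i (A.x (A.σ.symm j).castSucc) (A.x (A.σ.symm j).succ)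

/-- Utilitarian welfare of a contiguous allocation. -/
noncomputable def cWelfare {n : ℕ} (C : CakeInstance n) (A : ContigAlloc n) : ℝ :=
  ∑ i, cval C A i i

/-- Egalitarian welfare of a contiguous allocation. -/
noncomputable def cEgal {n : ℕ} (C : CakeInstance n) (A : ContigAlloc n) : ℝ :=
  ⨅ i, cval C A i i

/-- A contiguous allocation is envy-free if nobody prefers another player's interval. -/
def cEnvyFree {n : ℕ} (C : CakeInstance n) (A : ContigAlloc n) : Prop :=
  ∀ i j, cval C A i j ≤ cval C A i i

/-- A `k`-piece allocation: each player `i` receives the union of (at most) `k`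
closed intervals `[lo i m, hi i m] ⊆ [0,1]` (possibly degenerate); all these
intervals are pairwise non-overlapping and together they cover `[0,1]`. -/
structure KPieceAlloc (n k : ℕ) where
  lo : Fin n → Fin k → ℝ
  hi : Fin n → Fin k → ℝ
  le : ∀ i m, lo i m ≤ hi i m
  sub : ∀ i m, Set.Icc (lo i m) (hi i m) ⊆ Set.Icc (0:ℝ) 1
  nonoverlap : ∀ i m i' m', (i, m) ≠ (i', m') →
      Set.Ioo (lo i m) (hi i m) ∩ Set.Ioo (lo i' m') (hi i' m') = ∅
  cover : (⋃ i, ⋃ m, Set.Icc (lo i m) (hi i m)) = Set.Icc (0:ℝ) 1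

/-- Value of player `i` for the portion received by player `j` in a `k`-piece allocation. -/
noncomputable def kval {n k : ℕ} (C : CakeInstance n) (A : KPieceAlloc n k) (i j : Fin n) : ℝ :=
  ∑ m, C.ival i (A.lo j m) (A.hi j m)

/-- Utilitarian welfare of a `k`-piece allocation. -/
noncomputable def kWelfare {n k : ℕ} (C : CakeInstance n) (A : KPieceAlloc n k) : ℝ :=
  ∑ i, kval C A i i

/-- Egalitarian welfare of a `k`-piece allocation. -/
noncomputable def kEgal {n k : ℕ} (C : CakeInstance n) (A : KPieceAlloc n k) : ℝ :=
  ⨅ i, kval C A i i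

/-- A `k`-piece allocation is envy-free if nobody prefers another player's portion. -/
def kEnvyFree {n k : ℕ} (C : CakeInstance n) (A : KPieceAlloc n k) : Prop :=
  ∀ i j, kval C A i j ≤ kval C A i i

/-- A witness that an `n`-player cake-cutting instance lies in the class `X(k)`:
cut points `0 = c 0 < c 1 < … < c (n*k) = 1` and an ownership map under which each
player owns exactly `k` of the pieces `[c j, c (j+1)]` and values the unowned pieces `0`. -/
structure XkWitness {n : ℕ} (C : CakeInstance n) (k : ℕ) where
  c : Fin (n*k+1) → ℝ
  mono : StrictMono c
  first : c 0 = 0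
  last : c (Fin.last (n*k)) = 1
  owner : Fin (n*k) → Fin n
  ownCount : ∀ i : Fin n, (Finset.univ.filter fun j => owner j = i).card = k
  zeroVal : ∀ (i : Fin n) (j : Fin (n*k)), owner j ≠ i →
      C.ival i (c j.castSucc) (c j.succ) = 0

/-- The `j`-th owned piece, as a set. -/
def XkWitness.pieceSet {n k : ℕ} {C : CakeInstance n} (W : XkWitness C k)
    (j : Fin (n*k)) : Set ℝ :=
  Set.Icc (W.c j.castSucc) (W.c j.succ)

/-- Value of player `i` for the `j`-th owned piece. -/
noncomputable def XkWitness.pieceVal {n k : ℕ} {C : CakeInstance n} (W : XkWitness C k)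
    (i : Fin n) (j : Fin (n*k)) : ℝ :=
  C.ival i (W.c j.castSucc) (W.c j.succ)

/-- A `k`-piece allocation gives each player exactly the pieces he owns:
every owned piece occurs among its owner's allocated intervals. -/
def XkWitness.givesOwnedPieces {n k : ℕ} {C : CakeInstance n} (W : XkWitness C k)
    (A : KPieceAlloc n k) : Prop :=
  ∀ j : Fin (n*k), ∃ m : Fin k,
    A.lo (W.owner j) m = W.c j.castSucc ∧ A.hi (W.owner j) m = W.c j.succ


section Aux
variable {n : ℕ} (C : CakeInstance n) (i : Fin n)

lemma ival_integrable {u v : ℝ} (hu : u ∈ Icc (0:ℝ) 1) (hv : v ∈ Icc (0:ℝ) 1) :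
    IntervalIntegrable (C.d i) volume u v :=
  ((C.cont i).mono (uIcc_subset_Icc hu hv)).intervalIntegrable

lemma ival_nonneg {u v : ℝ} (hu : u ∈ Icc (0:ℝ) 1) (hv : v ∈ Icc (0:ℝ) 1) (huv : u ≤ v) :
    0 ≤ C.ival i u v :=
  intervalIntegral.integral_nonneg huv (fun z hz => C.nonneg i z ⟨hu.1.trans hz.1, hz.2.trans hv.2⟩)

lemma ival_nonpos {u v : ℝ} (hu : u ∈ Icc (0:ℝ) 1) (hv : v ∈ Icc (0:ℝ) 1) (huv : v ≤ u) :
    C.ival i u v ≤ 0 := by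
  have h := ival_nonneg C i hv hu huv
  have : C.ival i u v = -(C.ival i v u) := intervalIntegral.integral_symm v u
  linarith [this ▸ neg_nonpos.mpr h, this]

lemma ival_mono {p1 p2 p3 p4 : ℝ} (h1 : 0 ≤ p1) (h12 : p1 ≤ p2) (h23 : p2 ≤ p3)
    (h34 : p3 ≤ p4) (h4 : p4 ≤ 1) :
    C.ival i p2 p3 ≤ C.ival i p1 p4 := by
  have m1 : p1 ∈ Icc (0:ℝ) 1 := ⟨h1, by linarith⟩
  have m2 : p2 ∈ Icc (0:ℝ) 1 := ⟨by linarith, by linarith⟩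
  have m3 : p3 ∈ Icc (0:ℝ) 1 := ⟨by linarith, by linarith⟩
  have m4 : p4 ∈ Icc (0:ℝ) 1 := ⟨by linarith, h4⟩
  have e1 := intervalIntegral.integral_add_adjacent_intervals
    (ival_integrable C i m1 m2) (ival_integrable C i m2 m3)
  have e2 := intervalIntegral.integral_add_adjacent_intervals
    (ival_integrable C i m1 m3) (ival_integrable C i m3 m4)
  have n1 := ival_nonneg C i m1 m2 h12
  have n3 := ival_nonneg C i m3 m4 h34
  simp only [CakeInstance.ival] at *
  linarith

lemma sum_ival_adjacent {m : ℕ} (g : Fin (m+1) → ℝ) (hg : ∀ t, g t ∈ Icc (0:ℝ) 1) :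
    ∑ t : Fin m, C.ival i (g t.castSucc) (g t.succ) = C.ival i (g 0) (g (Fin.last m)) := by
  set G : ℕ → ℝ := fun t => g ⟨min t m, Nat.lt_succ_of_le (min_le_right _ _)⟩ with hG
  have key : ∑ t ∈ Finset.range m, (∫ x in G t..G (t+1), C.d i x) = ∫ x in (G 0)..(G m), C.d i x :=
    intervalIntegral.sum_integral_adjacent_intervals (fun t _ => ival_integrable C i (hg _) (hg _))
  have h1 : ∀ t : Fin m, C.ival i (g t.castSucc) (g t.succ)
      = (fun s : ℕ => C.ival i (G s) (G (s+1))) t.val := by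
    intro t
    have e1 : G t.val = g t.castSucc := by
      simp only [hG]; congr 1; ext
      simp [Nat.min_eq_left (le_of_lt t.isLt)]
    have e2 : G (t.val+1) = g t.succ := by
      simp only [hG]; congr 1; ext
      simp [Nat.min_eq_left (Nat.succ_le_of_lt t.isLt)]
    simp only [e1.symm, e2.symm]
  rw [Finset.sum_congr rfl (fun t _ => h1 t),
    Fin.sum_univ_eq_sum_range (fun s => C.ival i (G s) (G (s+1))) m]
  have e0 : G 0 = g 0 := by simp only [hG]; congr 1
  have em : G m = g (Fin.last m) := by simp only [hG]; congr 1; ext; simp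
  simp only [CakeInstance.ival] at key ⊢
  rw [key, e0, em]

end Aux

section Key
variable {n k : ℕ} {C : CakeInstance n}

lemma piece_disj (W : XkWitness C k) {j j' : Fin (n*k)} {z : ℝ}
    (h1 : W.c j.castSucc < z) (h2 : z < W.c j.succ)
    (h1' : W.c j'.castSucc < z) (h2' : z < W.c j'.succ) : j = j' := by
  by_contra hne
  rcases lt_or_gt_of_ne hne with h | h
  · have : W.c j.succ ≤ W.c j'.castSucc := W.mono.monotone (by
      simp only [Fin.le_def, Fin.val_succ, Fin.coe_castSucc]
      omega)
    linarith
  · have : W.c j'.succ ≤ W.c j.castSucc := W.mono.monotone (by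
      simp only [Fin.le_def, Fin.val_succ, Fin.coe_castSucc]
      omega)
    linarith

open Classical in
noncomputable def cutSet (W : XkWitness C k) (A : ContigAlloc n) (i : Fin n) :
    Finset (Fin (n+1)) :=
  Finset.univ.filter (fun s => 0 < (s:ℕ) ∧ (s:ℕ) < n ∧
    ∃ j : Fin (n*k), W.owner j = i ∧ W.c j.castSucc < A.x s ∧ A.x s < W.c j.succ)

lemma cutSet_disjoint (W : XkWitness C k) (A : ContigAlloc n) {i i' : Fin n}
    (hne : i ≠ i') : Disjoint (cutSet W A i) (cutSet W A i') := by
  classical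
  rw [Finset.disjoint_left]
  intro s hs hs'
  simp only [cutSet, Finset.mem_filter, Finset.mem_univ, true_and] at hs hs'
  obtain ⟨-, -, j, hj, hj1, hj2⟩ := hs
  obtain ⟨-, -, j', hj', hj1', hj2'⟩ := hs'
  exact hne (hj ▸ hj' ▸ congrArg W.owner (piece_disj W hj1 hj2 hj1' hj2'))

lemma key_ineq (W : XkWitness C k) (A : ContigAlloc n) (hA : cEnvyFree C A) (i : Fin n) :
    1 ≤ ((k:ℝ) + (cutSet W A i).card) * cval C A i i := by
  classical
  have hx01 : ∀ t, A.x t ∈ Icc (0:ℝ) 1 := fun t =>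
    ⟨A.first ▸ A.mono (Fin.zero_le t), A.last ▸ A.mono (Fin.le_last t)⟩
  have hc01 : ∀ j, W.c j ∈ Icc (0:ℝ) 1 := fun j =>
    ⟨W.first ▸ W.mono.monotone (Fin.zero_le j), W.last ▸ W.mono.monotone (Fin.le_last j)⟩
  set a : Fin (n*k) → ℝ := fun j => W.c j.castSucc with ha
  set b : Fin (n*k) → ℝ := fun j => W.c j.succ with hb
  have hab : ∀ j, a j ≤ b j := fun j => W.mono.monotone j.castSucc_le_succ
  set vA := cval C A i i with hvA
  have hxadj : ∀ t : Fin n, A.x t.castSucc ≤ A.x t.succ := fun t => A.mono t.castSucc_le_succ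
  have hvA0 : 0 ≤ vA := ival_nonneg C i (hx01 _) (hx01 _) (hxadj _)
  have hEF : ∀ t : Fin n, C.ival i (A.x t.castSucc) (A.x t.succ) ≤ vA := by
    intro t
    have h := hA i (A.σ t)
    simpa [cval, Equiv.symm_apply_apply, hvA] using h
  have htot : ∑ j : Fin (n*k), C.ival i (a j) (b j) = 1 := by
    have h := sum_ival_adjacent C i W.c hc01
    rw [h, W.first, W.last]
    exact C.total i
  set O : Finset (Fin (n*k)) := Finset.univ.filter (fun j => W.owner j = i) with hO
  have hOcard : O.card = k := W.ownCount i
  have howned : ∑ j ∈ O, C.ival i (a j) (b j) = 1 := by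
    rw [← htot]
    apply Finset.sum_subset (Finset.subset_univ O)
    intro j _ hj
    have hne : W.owner j ≠ i := by simpa [hO] using hj
    exact W.zeroVal i j hne
  set y : Fin (n*k) → Fin (n+1) → ℝ := fun j s => max (a j) (min (b j) (A.x s)) with hy
  have hy01 : ∀ j s, y j s ∈ Icc (0:ℝ) 1 := by
    intro j s
    exact ⟨le_trans (hc01 j.castSucc).1 (le_max_left _ _),
      max_le (hc01 _).2 (le_trans (min_le_left _ _) (hc01 _).2)⟩
  have hpiece : ∀ j : Fin (n*k),
      C.ival i (a j) (b j) = ∑ t : Fin n, C.ival i (y j t.castSucc) (y j t.succ) := by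
    intro j
    rw [sum_ival_adjacent C i (y j) (hy01 j)]
    have e0 : y j 0 = a j := by
      show max (a j) (min (b j) (A.x 0)) = a j
      rw [A.first, min_eq_right (hc01 _).1]
      exact max_eq_left (hc01 _).1
    have e1 : y j (Fin.last n) = b j := by
      show max (a j) (min (b j) (A.x (Fin.last n))) = b j
      rw [A.last, min_eq_left (hc01 _).2]
      exact max_eq_right (hab j)
    rw [e0, e1]
  set P : Fin (n*k) → Fin n → Prop := fun j t => y j t.castSucc < y j t.succ with hP
  have hPlt : ∀ j t, P j t → A.x t.castSucc < b j ∧ a j < A.x t.succ := by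
    intro j t hp
    simp only [hP, hy] at hp
    constructor
    · by_contra hcon
      push_neg at hcon
      have h2 : b j ≤ A.x t.succ := le_trans hcon (hxadj t)
      rw [min_eq_left hcon, min_eq_left h2] at hp
      exact lt_irrefl _ hp
    · by_contra hcon
      push_neg at hcon
      have h2 : A.x t.castSucc ≤ a j := le_trans (hxadj t) hcon
      have m1 : max (a j) (min (b j) (A.x t.castSucc)) = a j :=
        max_eq_left (le_trans (min_le_right _ _) h2)
      have m2 : max (a j) (min (b j) (A.x t.succ)) = a j :=
        max_eq_left (le_trans (min_le_right _ _) hcon)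
      rw [m1, m2] at hp
      exact lt_irrefl _ hp
  have hterm : ∀ j t, C.ival i (y j t.castSucc) (y j t.succ) ≤
      (if P j t then C.ival i (A.x t.castSucc) (A.x t.succ) else 0) := by
    intro j t
    by_cases hp : P j t
    · rw [if_pos hp]
      obtain ⟨hub, hlb⟩ := hPlt j t hp
      have e1 : A.x t.castSucc ≤ y j t.castSucc := by
        show A.x t.castSucc ≤ max (a j) (min (b j) (A.x t.castSucc))
        rw [min_eq_right hub.le]
        exact le_max_right _ _
      have e2 : y j t.succ ≤ A.x t.succ :=
        max_le hlb.le (min_le_right _ _)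
      exact ival_mono C i (hx01 t.castSucc).1 e1 hp.le e2 (hx01 t.succ).2
    · rw [if_neg hp]
      exact ival_nonpos C i (hy01 j _) (hy01 j _) (not_lt.mp hp)
  set G := (O ×ˢ (Finset.univ : Finset (Fin n))).filter (fun p => P p.1 p.2) with hG
  have hsum : (1:ℝ) ≤ G.card * vA := by
    have c1 : (1:ℝ) = ∑ j ∈ O, ∑ t : Fin n, C.ival i (y j t.castSucc) (y j t.succ) := by
      rw [← Finset.sum_congr rfl (fun j _ => hpiece j)]
      exact howned.symm
    have c2 : ∑ j ∈ O, ∑ t : Fin n, C.ival i (y j t.castSucc) (y j t.succ)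
        ≤ ∑ j ∈ O, ∑ t : Fin n,
          (if P j t then C.ival i (A.x t.castSucc) (A.x t.succ) else 0) :=
      Finset.sum_le_sum fun j _ => Finset.sum_le_sum fun t _ => hterm j t
    have c3 : ∑ p ∈ G, C.ival i (A.x p.2.castSucc) (A.x p.2.succ)
        = ∑ j ∈ O, ∑ t : Fin n,
          (if P j t then C.ival i (A.x t.castSucc) (A.x t.succ) else 0) := by
      rw [hG, Finset.sum_filter, Finset.sum_product]
    have c4 : ∑ p ∈ G, C.ival i (A.x p.2.castSucc) (A.x p.2.succ) ≤ ∑ p ∈ G, vA :=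
      Finset.sum_le_sum fun p _ => hEF p.2
    rw [Finset.sum_const, nsmul_eq_mul] at c4
    linarith
  have hcard : G.card ≤ k + (cutSet W A i).card := by
    have hinj : G.card ≤ (O.disjSum (cutSet W A i)).card := by
     apply Finset.card_le_card_of_injOn
       (fun p => if (∀ t' < p.2, ¬ P p.1 t') then Sum.inl p.1 else Sum.inr p.2.castSucc)
     · intro p hp
       replace hp : p ∈ G := hp
       simp only [Finset.mem_coe]
       simp only [hG, Finset.mem_filter, Finset.mem_product, Finset.mem_univ, and_true] at hp
       obtain ⟨hpO, hpP⟩ := hp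
       by_cases hmin : ∀ t' < p.2, ¬ P p.1 t'
       · rw [if_pos hmin]
         exact Finset.inl_mem_disjSum.mpr hpO
       · rw [if_neg hmin]
         push_neg at hmin
         obtain ⟨t', ht'lt, ht'P⟩ := hmin
         apply Finset.inr_mem_disjSum.mpr
         simp only [cutSet, Finset.mem_filter, Finset.mem_univ, true_and]
         have hOi : W.owner p.1 = i := by simpa [hO] using hpO
         refine ⟨?_, ?_, p.1, hOi, ?_, (hPlt _ _ hpP).1⟩
         · simp only [Fin.coe_castSucc]
           exact Nat.lt_of_le_of_lt (Nat.zero_le _) (Fin.lt_def.mp ht'lt)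
         · simpa using p.2.isLt
         · have hlow := (hPlt _ _ ht'P).2
           have hle : A.x t'.succ ≤ A.x p.2.castSucc := A.mono (by
             simp only [Fin.le_def, Fin.val_succ, Fin.coe_castSucc]
             exact ht'lt)
           linarith
     · intro p hp q hq hfeq
       simp only [hG, Finset.coe_filter, Finset.mem_product, Finset.mem_univ, and_true,
         Set.mem_setOf_eq, Finset.mem_coe] at hp hq
       obtain ⟨hpO, hpP⟩ := hp
       obtain ⟨hqO, hqP⟩ := hq
       dsimp only at hfeq
       by_cases hpm : ∀ t' < p.2, ¬ P p.1 t' <;> by_cases hqm : ∀ t' < q.2, ¬ P q.1 t'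
       · rw [if_pos hpm, if_pos hqm] at hfeq
         have hj : p.1 = q.1 := Sum.inl.inj hfeq
         have ht : p.2 = q.2 := by
           rcases lt_trichotomy p.2 q.2 with h | h | h
           · exact absurd (hj ▸ hpP) (hqm p.2 h)
           · exact h
           · exact absurd (hj ▸ hqP) (hpm q.2 h)
         exact Prod.ext hj ht
       · rw [if_pos hpm, if_neg hqm] at hfeq
         exact absurd hfeq (by simp)
       · rw [if_neg hpm, if_pos hqm] at hfeq
         exact absurd hfeq (by simp)
       · rw [if_neg hpm, if_neg hqm] at hfeq
         have ht : p.2 = q.2 := Fin.castSucc_inj.mp (Sum.inr.inj hfeq)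
         push_neg at hpm hqm
         obtain ⟨t1, ht1lt, ht1P⟩ := hpm
         obtain ⟨t2, ht2lt, ht2P⟩ := hqm
         have hz1 : A.x p.2.castSucc < b p.1 := (hPlt _ _ hpP).1
         have hz1' : a p.1 < A.x p.2.castSucc := by
           have hlow := (hPlt _ _ ht1P).2
           have hle : A.x t1.succ ≤ A.x p.2.castSucc := A.mono (by
             simp only [Fin.le_def, Fin.val_succ, Fin.coe_castSucc]
             exact ht1lt)
           linarith
         have hz2 : A.x p.2.castSucc < b q.1 := ht ▸ (hPlt _ _ hqP).1
         have hz2' : a q.1 < A.x p.2.castSucc := by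
           have hlow := (hPlt _ _ ht2P).2
           have hle : A.x t2.succ ≤ A.x q.2.castSucc := A.mono (by
             simp only [Fin.le_def, Fin.val_succ, Fin.coe_castSucc]
             exact ht2lt)
           rw [← ht] at hle
           linarith
         have hj : p.1 = q.1 := piece_disj W hz1' hz1 hz2' hz2
         exact Prod.ext hj ht
    rw [Finset.card_disjSum, hOcard] at hinj
    exact hinj
  have hc' : (G.card:ℝ) ≤ (k:ℝ) + (cutSet W A i).card := by exact_mod_cast hcard
  nlinarith [hsum, hvA0, hc']

end Key

/-- For `1 ≤ k < n` and an instance in `X(k)`, every envy-free contiguous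
allocation of maximal utilitarian welfare (among envy-free contiguous allocations) has
utilitarian welfare at least `n/(k+2)`. -/
theorem optimal_ef_welfare_lower_bound (n k : ℕ) (hk : 1 ≤ k) (hkn : k < n)
    (C : CakeInstance n) (W : XkWitness C k)
    (A : ContigAlloc n) (hA : cEnvyFree C A)
    (hopt : ∀ B : ContigAlloc n, cEnvyFree C B → cWelfare C B ≤ cWelfare C A) :
    (n:ℝ) / ((k:ℝ) + 2) ≤ cWelfare C A := by
  classical
  have hx01 : ∀ t, A.x t ∈ Icc (0:ℝ) 1 := fun t =>
    ⟨A.first ▸ A.mono (Fin.zero_le t), A.last ▸ A.mono (Fin.le_last t)⟩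
  set cc : Fin n → ℕ := fun i => (cutSet W A i).card with hcc
  have hkey : ∀ i, 1 ≤ ((k:ℝ) + cc i) * cval C A i i := fun i => key_ineq W A hA i
  have hv0 : ∀ i, 0 ≤ cval C A i i := fun i =>
    ival_nonneg C i (hx01 _) (hx01 _) (A.mono (Fin.castSucc_le_succ _))
  have hk1 : (1:ℝ) ≤ (k:ℝ) := by exact_mod_cast hk
  -- bound on sum of cut counts
  have hbiU : (Finset.univ.biUnion (fun i => cutSet W A i)).card = ∑ i, cc i :=
    Finset.card_biUnion (fun x _ y _ hxy => cutSet_disjoint W A hxy)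
  have hn2 : 2 ≤ n := by omega
  have hsub : Finset.univ.biUnion (fun i => cutSet W A i) ⊆
      ((Finset.univ.erase (0 : Fin (n+1))).erase (Fin.last n)) := by
    intro s hs
    simp only [Finset.mem_biUnion] at hs
    obtain ⟨i, -, hs⟩ := hs
    simp only [cutSet, Finset.mem_filter, Finset.mem_univ, true_and] at hs
    obtain ⟨h1, h2, -⟩ := hs
    simp only [Finset.mem_erase, Finset.mem_univ, and_true]
    constructor
    · intro h
      rw [h] at h2
      simp only [Fin.val_last] at h2
      omega
    · intro h
      rw [h] at h1
      simp at h1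
  have hcardsub : ((Finset.univ.erase (0 : Fin (n+1))).erase (Fin.last n)).card = n - 1 := by
    have hmem : Fin.last n ∈ Finset.univ.erase (0 : Fin (n+1)) := by
      refine Finset.mem_erase.mpr ⟨?_, Finset.mem_univ _⟩
      intro h
      have := congrArg Fin.val h
      simp only [Fin.val_last, Fin.val_zero] at this
      omega
    rw [Finset.card_erase_of_mem hmem, Finset.card_erase_of_mem (Finset.mem_univ _),
      Finset.card_univ, Fintype.card_fin]
    omega
  have hcsumN : ∑ i, cc i ≤ n - 1 := by
    rw [← hbiU, ← hcardsub]
    exact Finset.card_le_card hsub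
  have hcsumR : ∑ i : Fin n, (cc i : ℝ) ≤ (n:ℝ) - 1 := by
    have h1 : ((∑ i, cc i : ℕ) : ℝ) ≤ ((n - 1 : ℕ) : ℝ) := by exact_mod_cast hcsumN
    rw [Nat.cast_sum] at h1
    have h2 : ((n - 1 : ℕ) : ℝ) = (n:ℝ) - 1 := by
      rw [Nat.cast_sub (by omega)]
      simp
    linarith [h2 ▸ h1]
  -- per-player lower bound
  have hper : ∀ i, ((k:ℝ) + 2 - cc i) / ((k:ℝ)+1)^2 ≤ cval C A i i := by
    intro i
    have h1 := hkey i
    have h2 := hv0 i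
    have hc0 : (0:ℝ) ≤ (cc i : ℝ) := Nat.cast_nonneg _
    by_cases hcase0 : cc i ≤ k + 1
    have hcase : (cc i : ℝ) ≤ (k:ℝ) + 1 := by exact_mod_cast hcase0
    · have hpos : (0:ℝ) < (k:ℝ) + cc i := by linarith
      have hv : 1/((k:ℝ) + cc i) ≤ cval C A i i := by
        rw [div_le_iff₀ hpos]
        linarith
      have hdd : ((k:ℝ) + 2 - cc i) / ((k:ℝ)+1)^2 ≤ 1/((k:ℝ) + cc i) := by
        rw [div_le_div_iff₀ (by positivity) hpos]
        nlinarith [sq_nonneg ((cc i : ℝ) - 1)]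
      linarith
    · have hcase : (k:ℝ) + 2 ≤ (cc i : ℝ) := by
        have : k + 2 ≤ cc i := by omega
        exact_mod_cast this
      have hneg : ((k:ℝ) + 2 - cc i) / ((k:ℝ)+1)^2 ≤ 0 :=
        div_nonpos_of_nonpos_of_nonneg (by linarith) (by positivity)
      linarith
  -- sum up
  have hsumv : ∑ i : Fin n, (((k:ℝ) + 2 - cc i) / ((k:ℝ)+1)^2) ≤ cWelfare C A :=
    Finset.sum_le_sum (fun i _ => hper i)
  have hsimp : ∑ i : Fin n, (((k:ℝ) + 2 - cc i) / ((k:ℝ)+1)^2)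
      = ((n:ℝ)*((k:ℝ)+2) - ∑ i : Fin n, (cc i:ℝ)) / ((k:ℝ)+1)^2 := by
    rw [← Finset.sum_div]
    congr 1
    rw [Finset.sum_sub_distrib, Finset.sum_const, Finset.card_univ, Fintype.card_fin,
      nsmul_eq_mul]
  have hnR : (k:ℝ) + 1 ≤ (n:ℝ) := by exact_mod_cast hkn
  have hfin : (n:ℝ)/((k:ℝ)+2) ≤ ((n:ℝ)*((k:ℝ)+2) - ((n:ℝ)-1)) / ((k:ℝ)+1)^2 := by
    rw [div_le_div_iff₀ (by positivity) (by positivity)]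
    nlinarith [hk1, hnR]
  have hmid : ((n:ℝ)*((k:ℝ)+2) - ((n:ℝ)-1)) / ((k:ℝ)+1)^2
      ≤ ((n:ℝ)*((k:ℝ)+2) - ∑ i : Fin n, (cc i:ℝ)) / ((k:ℝ)+1)^2 := by
    gcongr
  rw [hsimp] at hsumv
  linarith
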